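/- arXiv:1512.06971 — 7 statements merged into one kernel-verified Lean document; each statement's English description precedes it below -/
import Mathlib

section
/- Let 0 < r_w < r_e, let γ ∈ (0,1], A ∈ ℝ, M ≥ 0, and let v, v_γ : [r_w, r_e] → ℝ be differentiable functions with v(r_e) = v_γ(r_e) = 0. Suppose that for every r ∈ [r_w, r_e] one has (d/dr)(r·v(r)) = γ·A·r and (d/dr)(r·v_γ(r)) = γ·A·r + γ·r·F(r), where F : [r_w, r_e] → ℝ is a continuous function (representing g(v_γ(r))·v_γ(r)²) satisfying |F(r)| ≤ M for all r. Then for every r ∈ [r_w, r_e], |v_γ(r) − v(r)| ≤ γ·M·(r_e² − r²)/(2r); in particular |v_γ(r) − v(r)| ≤ γ·C with C = M·r_e²/(2·r_w) depending only on r_w, r_e and M. -/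
/-- Proposition 3.1: the difference between the velocity `vγ` solving the full
radial equation (with the bounded nonlinear term `F`, `|F| ≤ M`) and the velocity
`v` solving the truncated equation is at most `γ·M·(r_e² − r²)/(2r) ≤ γ·C`
with `C = M·r_e²/(2·r_w)`. -/
theorem pi_prop_affinity_full_truncated
    (r_w r_e γ A M : ℝ)
    (hrw : 0 < r_w) (hre : r_w < r_e)
    (hγ0 : 0 < γ) (hγ1 : γ ≤ 1) (hM : 0 ≤ M)
    (v vγ F : ℝ → ℝ)
    (hv_re : v r_e = 0) (hvγ_re : vγ r_e = 0)
    (hv : ∀ r ∈ Set.Icc r_w r_e,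
      HasDerivWithinAt (fun r => r * v r) (γ * A * r) (Set.Icc r_w r_e) r)
    (hvγ : ∀ r ∈ Set.Icc r_w r_e,
      HasDerivWithinAt (fun r => r * vγ r) (γ * A * r + γ * r * F r) (Set.Icc r_w r_e) r)
    (hF : ContinuousOn F (Set.Icc r_w r_e))
    (hFM : ∀ r ∈ Set.Icc r_w r_e, |F r| ≤ M) :
    ∀ r ∈ Set.Icc r_w r_e,
      |vγ r - v r| ≤ γ * M * (r_e ^ 2 - r ^ 2) / (2 * r) ∧
      |vγ r - v r| ≤ γ * (M * r_e ^ 2 / (2 * r_w)) := by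
  intro r hr
  obtain ⟨hr1, hr2⟩ := hr
  have hr0 : 0 < r := lt_of_lt_of_le hrw hr1
  have hre0 : 0 < r_e := hrw.trans hre
  set D := Set.Icc r_w r_e with hD
  have hintD : interior D = Set.Ioo r_w r_e := by
    simp [hD]
  -- w = r*(vγ - v)
  have hw : ∀ s ∈ D, HasDerivWithinAt (fun s => s * vγ s - s * v s) (γ * s * F s) D s := by
    intro s hs
    have := (hvγ s hs).sub (hv s hs)
    rw [show γ * A * s + γ * s * F s - γ * A * s = γ * s * F s by ring] at this; exact this
  have hwc : ContinuousOn (fun s => s * vγ s - s * v s) D :=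
    fun s hs => (hw s hs).continuousWithinAt
  -- two monotone auxiliary functions
  have key : ∀ (σ : ℝ), σ = 1 ∨ σ = -1 →
      MonotoneOn (fun s => σ * (s * vγ s - s * v s) + γ * M * s ^ 2 / 2) D := by
    intro σ hσ
    apply monotoneOn_of_hasDerivWithinAt_nonneg (convex_Icc _ _)
      (f' := fun s => σ * (γ * s * F s) + γ * M * s)
    · exact (hwc.const_smul σ).add (Continuous.continuousOn (by continuity))
    · intro x hx
      rw [hintD] at hx
      have hx' : x ∈ D := Set.Ioo_subset_Icc_self hx
      have h1 : HasDerivWithinAt (fun s => σ * (s * vγ s - s * v s)) (σ * (γ * x * F x)) D x :=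
        (hw x hx').const_mul σ
      have h2 : HasDerivWithinAt (fun s : ℝ => γ * M * s ^ 2 / 2) (γ * M * x) D x := by
        have : HasDerivWithinAt (fun s : ℝ => s ^ 2) (2 * x) D x := by
          simpa using (hasDerivWithinAt_pow 2 x : HasDerivWithinAt (fun s : ℝ => s ^ 2) _ D x)
        have := (this.const_mul (γ * M)).div_const 2
        rw [show γ * M * (2 * x) / 2 = γ * M * x by ring] at this
        exact this
      exact ((h1.add h2).mono (hintD ▸ Set.Ioo_subset_Icc_self))
    · intro x hx
      rw [hintD] at hx
      have hx' : x ∈ D := Set.Ioo_subset_Icc_self hx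
      have hx0 : 0 < x := hrw.trans hx.1
      have hFx := hFM x hx'
      have h1 : |σ * F x| ≤ M := by
        rcases hσ with h | h <;> simp [h, abs_neg, hFx]
      have : -(M) ≤ σ * F x := (neg_le_of_abs_le h1)
      nlinarith [mul_pos hγ0 hx0]
  have hre_mem : r_e ∈ D := Set.right_mem_Icc.mpr (le_of_lt hre)
  have hr_mem : r ∈ D := ⟨hr1, hr2⟩
  have bound : ∀ (σ : ℝ), σ = 1 ∨ σ = -1 →
      σ * (r * vγ r - r * v r) ≤ γ * M * (r_e ^ 2 - r ^ 2) / 2 := by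
    intro σ hσ
    have := key σ hσ hr_mem hre_mem hr2
    simp only [hv_re, hvγ_re, mul_zero, sub_zero] at this
    nlinarith
  have habs : |r * vγ r - r * v r| ≤ γ * M * (r_e ^ 2 - r ^ 2) / 2 := by
    rw [abs_le]
    constructor
    · have := bound (-1) (Or.inr rfl); linarith
    · have := bound 1 (Or.inl rfl); linarith
  have h1 : |vγ r - v r| ≤ γ * M * (r_e ^ 2 - r ^ 2) / (2 * r) := by
    have : r * vγ r - r * v r = r * (vγ r - v r) := by ring
    rw [this, abs_mul, abs_of_pos hr0] at habs
    rw [le_div_iff₀ (by positivity : (0:ℝ) < 2 * r)]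
    nlinarith
  refine ⟨h1, h1.trans ?_⟩
  have e : γ * (M * r_e ^ 2 / (2 * r_w)) = γ * M * r_e ^ 2 / (2 * r_w) := by ring
  rw [e, div_le_div_iff₀ (by positivity) (by positivity)]
  nlinarith [mul_nonneg (mul_nonneg (mul_nonneg hγ0.le hM) (sq_nonneg r)) hrw.le,
    mul_nonneg (mul_nonneg (mul_nonneg hγ0.le hM) (sq_nonneg r_e)) (sub_nonneg.mpr hr1)]
end

section
/- Let 0 < r_w < r_e, h > 0, Q > 0, A = Q/(2πh(r_e² − r_w²)), and v(r) = A·(r_e² − r²)/r on [r_w, r_e]. Let G : [r_w, r_e] → ℝ be a continuous function (representing r ↦ g(v(r))·v(r), the modulus of the pressure gradient), and let W : [r_w, r_e] → ℝ be differentiable with W(r_w) = 0 and W'(r) = G(r) for all r. Then 2·A·∫_{r_w}^{r_e} W(r)·r dr = ∫_{r_w}^{r_e} G(r)·v(r)·r dr. Consequently, if ∫_{r_w}^{r_e} G(r)·v(r)·r dr > 0, the pseudo-steady-state productivity index J = Q·πh(r_e² − r_w²) / (2πh·∫_{r_w}^{r_e} W(r)·r dr) equals Q² / (2πh·∫_{r_w}^{r_e}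 G(r)·v(r)·r dr). -/
/-- Key identity in the proof of Proposition 3.2: if `W` is the basic pressure
profile with `W(r_w) = 0` and `W' = G` (where `G(r) = g(v(r))·v(r)` is the modulus
of the pressure gradient), then `2A∫ W r dr = ∫ G v r dr`, and consequently the
pseudo-steady-state productivity index `Q|U|/∫_U W` equals
`Q²/(2πh ∫ r G(r) v(r) dr)`. -/
theorem pi_velocity_representation
    (r_w r_e h Q A : ℝ)
    (hrw : 0 < r_w) (hre : r_w < r_e) (hh : 0 < h) (hQ : 0 < Q)
    (hA : A = Q / (2 * Real.pi * h * (r_e ^ 2 - r_w ^ 2)))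
    (v : ℝ → ℝ) (hv : ∀ r, v r = A * (r_e ^ 2 - r ^ 2) / r)
    (G W : ℝ → ℝ)
    (hG : ContinuousOn G (Set.Icc r_w r_e))
    (hW0 : W r_w = 0)
    (hW : ∀ r ∈ Set.Icc r_w r_e, HasDerivWithinAt W (G r) (Set.Icc r_w r_e) r) :
    2 * A * (∫ r in r_w..r_e, W r * r) = (∫ r in r_w..r_e, G r * v r * r) ∧
    ((0 < ∫ r in r_w..r_e, G r * v r * r) →
      Q * (Real.pi * h * (r_e ^ 2 - r_w ^ 2)) /
          (2 * Real.pi * h * ∫ r in r_w..r_e, W r * r)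
        = Q ^ 2 / (2 * Real.pi * h * ∫ r in r_w..r_e, G r * v r * r)) := by
  have hπ := Real.pi_pos
  have hre2 : (0:ℝ) < r_e ^ 2 - r_w ^ 2 := by nlinarith
  have hApos : 0 < A := by rw [hA]; positivity
  have hle : r_w ≤ r_e := hre.le
  have huIcc : Set.uIcc r_w r_e = Set.Icc r_w r_e := Set.uIcc_of_le hle
  have hWc : ContinuousOn W (Set.Icc r_w r_e) := fun x hx => (hW x hx).continuousWithinAt
  set F : ℝ → ℝ := fun r => W r * (A * (r ^ 2 - r_e ^ 2)) with hFdef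
  set φ : ℝ → ℝ := fun r => G r * (A * (r ^ 2 - r_e ^ 2)) + W r * (A * (2 * r)) with hφdef
  have hFc : ContinuousOn F (Set.Icc r_w r_e) := by
    apply hWc.mul
    fun_prop
  have hφc : ContinuousOn φ (Set.Icc r_w r_e) := by
    apply ContinuousOn.add
    · exact hG.mul (by fun_prop)
    · exact hWc.mul (by fun_prop)
  have hφint : IntervalIntegrable φ MeasureTheory.volume r_w r_e :=
    hφc.intervalIntegrable_of_Icc hle
  have hF' : ∀ x ∈ Set.Ioo r_w r_e, HasDerivWithinAt F (φ x) (Set.Ioi x) x := by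
    intro x hx
    have hx' : Set.Icc r_w r_e ∈ nhds x := Icc_mem_nhds hx.1 hx.2
    have h1 : HasDerivAt W (G x) x :=
      (hW x (Set.mem_Icc_of_Ioo hx)).hasDerivAt hx'
    have h2 : HasDerivAt (fun r : ℝ => A * (r ^ 2 - r_e ^ 2)) (A * (2 * x)) x := by
      have h3 : HasDerivAt (fun r : ℝ => r ^ 2 - r_e ^ 2) (2 * x) x := by
        simpa using (hasDerivAt_pow 2 x).sub_const (r_e ^ 2)
      simpa using h3.const_mul A
    exact ((h1.mul h2).hasDerivWithinAt)
  have hFTC : (∫ r in r_w..r_e, φ r) = F r_e - F r_w :=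
    intervalIntegral.integral_eq_sub_of_hasDeriv_right_of_le hle hFc hF' hφint
  have hF0 : F r_e - F r_w = 0 := by simp [hFdef, hW0]
  have hint1 : IntervalIntegrable (fun r => G r * (A * (r ^ 2 - r_e ^ 2)))
      MeasureTheory.volume r_w r_e :=
    (hG.mul (by fun_prop)).intervalIntegrable_of_Icc hle
  have hint2 : IntervalIntegrable (fun r => W r * (A * (2 * r)))
      MeasureTheory.volume r_w r_e :=
    (hWc.mul (by fun_prop)).intervalIntegrable_of_Icc hle
  have hsplit : (∫ r in r_w..r_e, φ r)
      = (∫ r in r_w..r_e, G r * (A * (r ^ 2 - r_e ^ 2)))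
        + ∫ r in r_w..r_e, W r * (A * (2 * r)) :=
    intervalIntegral.integral_add hint1 hint2
  have h2int : (∫ r in r_w..r_e, W r * (A * (2 * r)))
      = 2 * A * ∫ r in r_w..r_e, W r * r := by
    rw [← intervalIntegral.integral_const_mul]
    congr 1; funext r; ring
  have hGv : (∫ r in r_w..r_e, G r * v r * r)
      = ∫ r in r_w..r_e, G r * (A * (r_e ^ 2 - r ^ 2)) := by
    apply intervalIntegral.integral_congr
    intro r hr
    rw [huIcc] at hr
    have hr0 : r ≠ 0 := ne_of_gt (lt_of_lt_of_le hrw hr.1)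
    show G r * v r * r = G r * (A * (r_e ^ 2 - r ^ 2))
    rw [hv r]; field_simp
  have hneg : (∫ r in r_w..r_e, G r * (A * (r_e ^ 2 - r ^ 2)))
      = - ∫ r in r_w..r_e, G r * (A * (r ^ 2 - r_e ^ 2)) := by
    rw [← intervalIntegral.integral_neg]
    congr 1; funext r; ring
  have key : 2 * A * (∫ r in r_w..r_e, W r * r) = ∫ r in r_w..r_e, G r * v r * r := by
    rw [hGv, hneg]
    have := hFTC
    rw [hF0, hsplit, h2int] at this
    linarith
  refine ⟨key, fun hpos => ?_⟩
  set I := ∫ r in r_w..r_e, G r * v r * r with hI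
  have hWint : (∫ r in r_w..r_e, W r * r) = I / (2 * A) := by
    field_simp
    linarith [key]
  rw [hWint, hA]
  have h2πh : (2 * Real.pi * h * (r_e ^ 2 - r_w ^ 2)) ≠ 0 := by positivity
  field_simp
end

section
/- Let 0 < r_w < r_e, h > 0, Q > 0, α > 0, β > 0, A = Q/(2πh(r_e² − r_w²)), v(r) = A·(r_e² − r²)/r. Suppose 0 < v_F ≤ v(r_w) and r_F ∈ [r_w, r_e] satisfies v(r_F) = v_F. Define g(ξ) = α + βξ for ξ ≥ v_F and g(ξ) = α for 0 ≤ ξ < v_F, and set J_FDD = Q² / (2πh·∫_{r_w}^{r_e} r·g(v(r))·v(r)² dr), L = 2πh(r_e² − r_w²)², S_F[r_w, r_F] = ∫_{r_w}^{r_F} (α + β·A·(r_e² − r²)·r^{−1})·(r_e² − r²)²·r^{−1} dr, and S_D[r_F, r_e] = α·∫_{r_F}^{r_e} (r_e² − r²)²·r^{−1} dr. Then J_FDD = L / (S_F[r_w, r_F] + S_D[r_F, r_e]). -/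
open MeasureTheory Set intervalIntegral

/-- Proposition 3.2, Forchheimer–Darcy–Darcy (FDD) case:
`J_FDD = L / (S_F[r_w, r_F] + S_D[r_F, r_e])`. -/
theorem pi_FDD
    (r_w r_e h Q α β A : ℝ)
    (hrw : 0 < r_w) (hre : r_w < r_e) (hh : 0 < h) (hQ : 0 < Q)
    (hα : 0 < α) (hβ : 0 < β)
    (hA : A = Q / (2 * Real.pi * h * (r_e ^ 2 - r_w ^ 2)))
    (v : ℝ → ℝ) (hv : ∀ r, v r = A * (r_e ^ 2 - r ^ 2) / r)
    (v_F : ℝ) (hvF0 : 0 < v_F) (hvFw : v_F ≤ v r_w)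
    (r_F : ℝ) (hrF : r_F ∈ Set.Icc r_w r_e) (hvrF : v r_F = v_F)
    (g : ℝ → ℝ) (hg : ∀ ξ : ℝ, g ξ = if v_F ≤ ξ then α + β * ξ else α) :
    Q ^ 2 / (2 * Real.pi * h * ∫ r in r_w..r_e, r * g (v r) * v r ^ 2)
      = 2 * Real.pi * h * (r_e ^ 2 - r_w ^ 2) ^ 2 /
          ((∫ r in r_w..r_F,
              (α + β * A * (r_e ^ 2 - r ^ 2) * r⁻¹) * (r_e ^ 2 - r ^ 2) ^ 2 * r⁻¹) +
            α * ∫ r in r_F..r_e, (r_e ^ 2 - r ^ 2) ^ 2 * r⁻¹) := by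
  obtain ⟨hwF, hFe⟩ := hrF
  have hπ : (0:ℝ) < Real.pi := Real.pi_pos
  have hD : (0:ℝ) < r_e ^ 2 - r_w ^ 2 := by nlinarith
  have hApos : 0 < A := by
    rw [hA]; positivity
  -- strict antitonicity of v on positives
  have hmono : ∀ a b : ℝ, 0 < a → a < b → v b < v a := by
    intro a b ha hab
    have hb : (0:ℝ) < b := ha.trans hab
    have hre0 : (0:ℝ) < r_e := hrw.trans hre
    rw [hv, hv, div_lt_div_iff₀ hb ha]
    nlinarith [mul_pos (mul_pos hApos (sub_pos.2 hab)) (mul_pos ha hb),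
      mul_pos (mul_pos hApos (sub_pos.2 hab)) (pow_pos hre0 2)]
  set φ₁ : ℝ → ℝ := fun r =>
    A ^ 2 * ((α + β * A * (r_e ^ 2 - r ^ 2) * r⁻¹) * (r_e ^ 2 - r ^ 2) ^ 2 * r⁻¹) with hφ₁
  set φ₂ : ℝ → ℝ := fun r => A ^ 2 * (α * ((r_e ^ 2 - r ^ 2) ^ 2 * r⁻¹)) with hφ₂
  set F : ℝ → ℝ := fun r => r * g (v r) * v r ^ 2 with hF
  -- pointwise identities
  have heq1 : ∀ r ∈ Set.uIcc r_w r_F, F r = φ₁ r := by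
    intro r hr
    rw [Set.uIcc_of_le hwF] at hr
    have hr0 : 0 < r := hrw.trans_le hr.1
    have hge : v_F ≤ v r := by
      rcases eq_or_lt_of_le hr.2 with h' | h'
      · rw [h', hvrF]
      · exact (hvrF ▸ (hmono r r_F hr0 h').le)
    have hg' : g (v r) = α + β * v r := by rw [hg]; exact if_pos hge
    rw [hF, hφ₁]
    simp only
    rw [hg', hv]
    field_simp
  have heq2 : ∀ r ∈ Set.uIoc r_F r_e, F r = φ₂ r := by
    intro r hr
    rw [Set.uIoc_of_le hFe] at hr
    have hrF0 : 0 < r_F := hrw.trans_le hwF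
    have hr0 : 0 < r := hrF0.trans hr.1
    have hlt : v r < v_F := hvrF ▸ hmono r_F r hrF0 hr.1
    have hg' : g (v r) = α := by rw [hg]; exact if_neg (not_le.2 hlt)
    rw [hF, hφ₂]
    simp only
    rw [hg', hv]
    field_simp
  -- continuity / integrability
  have hne1 : ∀ x ∈ Set.uIcc r_w r_F, x ≠ 0 := by
    intro x hx
    rw [Set.uIcc_of_le hwF] at hx
    exact (hrw.trans_le hx.1).ne'
  have hne2 : ∀ x ∈ Set.uIcc r_F r_e, x ≠ 0 := by
    intro x hx
    rw [Set.uIcc_of_le hFe] at hx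
    exact ((hrw.trans_le hwF).trans_le hx.1).ne'
  have hi1 : IntervalIntegrable φ₁ volume r_w r_F := by
    apply ContinuousOn.intervalIntegrable
    have hinv : ContinuousOn (fun x : ℝ => x⁻¹) (Set.uIcc r_w r_F) := continuousOn_id.inv₀ hne1
    have c1 : Continuous (fun x : ℝ => β * A * (r_e ^ 2 - x ^ 2)) :=
      continuous_const.mul (continuous_const.sub (continuous_pow 2))
    have c2 : Continuous (fun x : ℝ => (r_e ^ 2 - x ^ 2) ^ 2) :=
      (continuous_const.sub (continuous_pow 2)).pow 2
    exact continuousOn_const.mul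
      (((continuousOn_const.add (c1.continuousOn.mul hinv)).mul c2.continuousOn).mul hinv)
  have hi2 : IntervalIntegrable φ₂ volume r_F r_e := by
    apply ContinuousOn.intervalIntegrable
    have hinv : ContinuousOn (fun x : ℝ => x⁻¹) (Set.uIcc r_F r_e) := continuousOn_id.inv₀ hne2
    have c2 : Continuous (fun x : ℝ => (r_e ^ 2 - x ^ 2) ^ 2) :=
      (continuous_const.sub (continuous_pow 2)).pow 2
    exact continuousOn_const.mul (continuousOn_const.mul (c2.continuousOn.mul hinv))
  have hiF1 : IntervalIntegrable F volume r_w r_F := by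
    apply hi1.congr
    intro x hx
    exact (heq1 x (Set.uIoc_subset_uIcc hx)).symm
  have hiF2 : IntervalIntegrable F volume r_F r_e := by
    apply hi2.congr
    intro x hx
    exact (heq2 x hx).symm
  have hsplit : (∫ r in r_w..r_e, F r) = (∫ r in r_w..r_F, F r) + ∫ r in r_F..r_e, F r :=
    (integral_add_adjacent_intervals hiF1 hiF2).symm
  have he1 : (∫ r in r_w..r_F, F r) = A ^ 2 *
      ∫ r in r_w..r_F, (α + β * A * (r_e ^ 2 - r ^ 2) * r⁻¹) * (r_e ^ 2 - r ^ 2) ^ 2 * r⁻¹ := by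
    rw [intervalIntegral.integral_congr heq1, hφ₁, intervalIntegral.integral_const_mul]
  have he2 : (∫ r in r_F..r_e, F r) = A ^ 2 *
      (α * ∫ r in r_F..r_e, (r_e ^ 2 - r ^ 2) ^ 2 * r⁻¹) := by
    rw [intervalIntegral.integral_congr_ae (Filter.Eventually.of_forall heq2), hφ₂,
      intervalIntegral.integral_const_mul, intervalIntegral.integral_const_mul]
  set S₁ := ∫ r in r_w..r_F, (α + β * A * (r_e ^ 2 - r ^ 2) * r⁻¹) * (r_e ^ 2 - r ^ 2) ^ 2 * r⁻¹
  set S₂ := ∫ r in r_F..r_e, (r_e ^ 2 - r ^ 2) ^ 2 * r⁻¹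
  have : (∫ r in r_w..r_e, r * g (v r) * v r ^ 2) = A ^ 2 * (S₁ + α * S₂) := by
    show (∫ r in r_w..r_e, F r) = _
    rw [hsplit, he1, he2]; ring
  rw [this, hA]
  rcases eq_or_ne (S₁ + α * S₂) 0 with h0 | h0
  · rw [h0]; simp
  · field_simp
end

section
/- Let 0 < r_w < r_e, h > 0, Q > 0, α > 0, λ > 0, 0 ≤ s < 1, A = Q/(2πh(r_e² − r_w²)), v(r) = A·(r_e² − r²)/r. Suppose 0 < v_D ≤ v(r_w) and r_D ∈ [r_w, r_e] satisfies v(r_D) = v_D. Define g(ξ) = α for ξ ≥ v_D and g(ξ) = λ·ξ^{−s} for 0 < ξ < v_D, and set J_DDpD = Q² / (2πh·∫_{r_w}^{r_e} r·g(v(r))·v(r)² dr), L = 2πh(r_e² − r_w²)², S_D[r_w, r_D] = α·∫_{r_w}^{r_D} (r_e² − r²)²·r^{−1} dr, and S_pD[r_D, r_e] = λ·A^{−s}·∫_{r_D}^{r_e} (r_e² − r²)^{2−s}·r^{s−1} dr. Then J_DDpD = L / (S_D[r_w, r_D] + S_pD[r_D, r_e]). -/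
/-- Proposition 3.2, Darcy–Darcy–pre-Darcy (DDpD) case:
`J_DDpD = L / (S_D[r_w, r_D] + S_pD[r_D, r_e])`, where the pre-Darcy law is
`g(ξ) = λ ξ^{−s}`, `0 ≤ s < 1`, for slow flow `ξ < v_D`. -/
theorem pi_DDpD
    (r_w r_e h Q α lam s A : ℝ)
    (hrw : 0 < r_w) (hre : r_w < r_e) (hh : 0 < h) (hQ : 0 < Q)
    (hα : 0 < α) (hlam : 0 < lam) (hs0 : 0 ≤ s) (hs1 : s < 1)
    (hA : A = Q / (2 * Real.pi * h * (r_e ^ 2 - r_w ^ 2)))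
    (v : ℝ → ℝ) (hv : ∀ r, v r = A * (r_e ^ 2 - r ^ 2) / r)
    (v_D : ℝ) (hvD0 : 0 < v_D) (hvDw : v_D ≤ v r_w)
    (r_D : ℝ) (hrD : r_D ∈ Set.Icc r_w r_e) (hvrD : v r_D = v_D)
    (g : ℝ → ℝ) (hg : ∀ ξ : ℝ, g ξ = if v_D ≤ ξ then α else lam * ξ ^ (-s)) :
    Q ^ 2 / (2 * Real.pi * h * ∫ r in r_w..r_e, r * g (v r) * v r ^ 2)
      = 2 * Real.pi * h * (r_e ^ 2 - r_w ^ 2) ^ 2 /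
          (α * (∫ r in r_w..r_D, (r_e ^ 2 - r ^ 2) ^ 2 * r⁻¹) +
            lam * A ^ (-s) *
              ∫ r in r_D..r_e, (r_e ^ 2 - r ^ 2) ^ (2 - s) * r ^ (s - 1)) := by
  obtain ⟨hrD1, hrD2⟩ := hrD
  have hπ : 0 < Real.pi := Real.pi_pos
  have hsq : (0:ℝ) < r_e ^ 2 - r_w ^ 2 := by nlinarith
  have hc : (0:ℝ) < 2 * Real.pi * h * (r_e ^ 2 - r_w ^ 2) := by positivity
  have hA0 : 0 < A := by rw [hA]; exact div_pos hQ hc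
  -- monotonicity of v
  have hmono : ∀ a b : ℝ, r_w ≤ a → a ≤ b → v b ≤ v a := by
    intro a b ha hab
    have ha0 : 0 < a := lt_of_lt_of_le hrw ha
    have hb0 : 0 < b := lt_of_lt_of_le ha0 hab
    rw [hv, hv, div_le_div_iff₀ hb0 ha0]
    nlinarith [mul_nonneg (mul_nonneg hA0.le (sub_nonneg.2 hab))
      (add_nonneg (sq_nonneg r_e) (mul_pos ha0 hb0).le)]
  have hsmono : ∀ a b : ℝ, r_w ≤ a → a < b → v b < v a := by
    intro a b ha hab
    have ha0 : 0 < a := lt_of_lt_of_le hrw ha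
    have hb0 : 0 < b := lt_trans ha0 hab
    rw [hv, hv, div_lt_div_iff₀ hb0 ha0]
    nlinarith [mul_pos (mul_pos hA0 (sub_pos.2 hab))
      (add_pos_of_nonneg_of_pos (sq_nonneg r_e) (mul_pos ha0 hb0))]
  set F : ℝ → ℝ := fun r => r * g (v r) * v r ^ 2 with hF
  set f1 : ℝ → ℝ := fun r => α * A ^ 2 * ((r_e ^ 2 - r ^ 2) ^ 2 * r⁻¹) with hf1
  set f2 : ℝ → ℝ := fun r =>
    lam * A ^ ((2:ℝ) - s) * ((r_e ^ 2 - r ^ 2) ^ ((2:ℝ) - s) * r ^ (s - 1)) with hf2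
  -- pointwise identity on the Darcy region
  have key1 : Set.EqOn F f1 (Set.uIcc r_w r_D) := by
    intro x hx
    rw [Set.uIcc_of_le hrD1] at hx
    have hx0 : 0 < x := lt_of_lt_of_le hrw hx.1
    have hvx : v_D ≤ v x := hvrD ▸ hmono x r_D hx.1 hx.2
    have hxne : x ≠ 0 := ne_of_gt hx0
    show x * g (v x) * v x ^ 2 = α * A ^ 2 * ((r_e ^ 2 - x ^ 2) ^ 2 * x⁻¹)
    rw [hg, if_pos hvx, hv]
    have hxx : x * (x ^ 2)⁻¹ = x⁻¹ := by
      rw [pow_two, mul_inv, ← mul_assoc, mul_inv_cancel₀ hxne, one_mul]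
    rw [div_pow, mul_pow, show α * A ^ 2 * ((r_e ^ 2 - x ^ 2) ^ 2 * x⁻¹)
      = α * A ^ 2 * ((r_e ^ 2 - x ^ 2) ^ 2 * (x * (x ^ 2)⁻¹)) from by rw [hxx]]
    ring
  -- pointwise identity on the pre-Darcy region
  have key2 : Set.EqOn F f2 (Set.uIoc r_D r_e) := by
    intro x hx
    rw [Set.uIoc_of_le hrD2] at hx
    have hx0 : 0 < x := lt_of_lt_of_le hrw (le_trans hrD1 hx.1.le)
    have h2s : (0:ℝ) < 2 - s := by linarith
    rcases eq_or_lt_of_le hx.2 with hxe | hxe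
    · subst hxe
      have hv0 : v x = 0 := by rw [hv]; simp
      show x * g (v x) * v x ^ 2 = f2 x
      rw [hv0, hg 0, if_neg (by linarith)]
      simp only [hf2]
      simp [Real.zero_rpow (ne_of_gt h2s)]
    · have hsub : (0:ℝ) < r_e ^ 2 - x ^ 2 := by nlinarith
      have hvpos : 0 < v x := by rw [hv]; positivity
      have hvlt : v x < v_D := hvrD ▸ hsmono r_D x hrD1 hx.1
      have h1 : v x ^ (-s) * v x ^ (2:ℕ) = v x ^ ((2:ℝ) - s) := by
        rw [show ((2:ℝ) - s) = -s + 2 by ring, Real.rpow_add hvpos, Real.rpow_two]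
      have h2 : v x ^ ((2:ℝ) - s)
          = A ^ ((2:ℝ) - s) * (r_e ^ 2 - x ^ 2) ^ ((2:ℝ) - s) * (x ^ ((2:ℝ) - s))⁻¹ := by
        rw [hv, div_eq_mul_inv,
          Real.mul_rpow (by positivity) (by positivity),
          Real.mul_rpow hA0.le hsub.le, Real.inv_rpow hx0.le]
      have h3 : x * (x ^ ((2:ℝ) - s))⁻¹ = x ^ (s - 1) := by
        rw [← Real.rpow_neg hx0.le, show (s - 1) = 1 + -(2 - s) by ring,
          Real.rpow_add hx0, Real.rpow_one]
      show x * g (v x) * v x ^ 2 = _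
      rw [hg, if_neg (not_le.2 hvlt)]
      calc x * (lam * v x ^ (-s)) * v x ^ 2
          = lam * (v x ^ (-s) * v x ^ (2:ℕ)) * x := by ring
        _ = lam * (A ^ ((2:ℝ) - s) * (r_e ^ 2 - x ^ 2) ^ ((2:ℝ) - s)
              * (x ^ ((2:ℝ) - s))⁻¹) * x := by rw [h1, h2]
        _ = lam * A ^ ((2:ℝ) - s)
              * ((r_e ^ 2 - x ^ 2) ^ ((2:ℝ) - s) * (x * (x ^ ((2:ℝ) - s))⁻¹)) := by ring
        _ = f2 x := by rw [h3]
  -- integrability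
  have hi1 : IntervalIntegrable f1 MeasureTheory.volume r_w r_D := by
    apply ContinuousOn.intervalIntegrable
    apply ContinuousOn.mul continuousOn_const
    apply ContinuousOn.mul (by fun_prop)
    refine ContinuousOn.inv₀ continuousOn_id fun x hx => ?_
    rw [Set.uIcc_of_le hrD1] at hx
    exact ne_of_gt (lt_of_lt_of_le hrw hx.1)
  have hi2 : IntervalIntegrable f2 MeasureTheory.volume r_D r_e := by
    apply ContinuousOn.intervalIntegrable
    apply ContinuousOn.mul continuousOn_const
    apply ContinuousOn.mul
    · apply ContinuousOn.rpow_const (by fun_prop)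
      intro x hx; right; linarith
    · apply ContinuousOn.rpow_const continuousOn_id
      intro x hx; left
      rw [Set.uIcc_of_le hrD2] at hx
      exact ne_of_gt (lt_of_lt_of_le hrw (le_trans hrD1 hx.1))
  have hFi1 : IntervalIntegrable F MeasureTheory.volume r_w r_D := by
    rw [intervalIntegrable_iff] at hi1 ⊢
    exact hi1.congr_fun (fun x hx => (key1 (Set.uIoc_subset_uIcc hx)).symm)
      measurableSet_uIoc
  have hFi2 : IntervalIntegrable F MeasureTheory.volume r_D r_e := by
    rw [intervalIntegrable_iff] at hi2 ⊢
    exact hi2.congr_fun (fun x hx => (key2 hx).symm) measurableSet_uIoc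
  -- compute the integral
  have hsplit : ∫ r in r_w..r_e, F r
      = (∫ r in r_w..r_D, F r) + ∫ r in r_D..r_e, F r :=
    (intervalIntegral.integral_add_adjacent_intervals hFi1 hFi2).symm
  have hI1 : ∫ r in r_w..r_D, F r
      = α * A ^ 2 * ∫ r in r_w..r_D, (r_e ^ 2 - r ^ 2) ^ 2 * r⁻¹ := by
    rw [intervalIntegral.integral_congr key1, hf1,
      intervalIntegral.integral_const_mul]
  have hI2 : ∫ r in r_D..r_e, F r
      = lam * A ^ ((2:ℝ) - s)
        * ∫ r in r_D..r_e, (r_e ^ 2 - r ^ 2) ^ ((2:ℝ) - s) * r ^ (s - 1) := by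
    rw [intervalIntegral.integral_congr_ae
      (Filter.Eventually.of_forall fun x hx => key2 hx), hf2,
      intervalIntegral.integral_const_mul]
  have hA2s : A ^ ((2:ℝ) - s) = A ^ 2 * A ^ (-s) := by
    rw [show ((2:ℝ) - s) = -s + 2 by ring, Real.rpow_add hA0, Real.rpow_two]
    ring
  set I1 := ∫ r in r_w..r_D, (r_e ^ 2 - r ^ 2) ^ 2 * r⁻¹ with hI1d
  set I2 := ∫ r in r_D..r_e, (r_e ^ 2 - r ^ 2) ^ ((2:ℝ) - s) * r ^ (s - 1) with hI2d
  have htot : ∫ r in r_w..r_e, F r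
      = A ^ 2 * (α * I1 + lam * A ^ (-s) * I2) := by
    rw [hsplit, hI1, hI2, hA2s]; ring
  have htot' : intervalIntegral F r_w r_e MeasureTheory.volume
      = A ^ 2 * (α * I1 + lam * A ^ (-s) * I2) := htot
  rw [htot']
  have hQ2 : Q ^ 2 = (2 * Real.pi * h * A ^ 2)
      * (2 * Real.pi * h * (r_e ^ 2 - r_w ^ 2) ^ 2) := by
    rw [hA]; field_simp
  rw [show 2 * Real.pi * h * (A ^ 2 * (α * I1 + lam * A ^ (-s) * I2))
      = (2 * Real.pi * h * A ^ 2) * (α * I1 + lam * A ^ (-s) * I2) from by ring,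
    hQ2, mul_div_mul_left _ _ (by positivity)]
end

section
/- Let 0 < r_w < r_e, h > 0, Q > 0, α > 0, β > 0, λ > 0, 0 ≤ s < 1, A = Q/(2πh(r_e² − r_w²)), v(r) = A·(r_e² − r²)/r. Suppose 0 < v_D ≤ v_F ≤ v(r_w), and r_F, r_D ∈ [r_w, r_e] satisfy v(r_F) = v_F and v(r_D) = v_D (so that r_w ≤ r_F ≤ r_D ≤ r_e). Define g(ξ) = α + βξ for ξ ≥ v_F, g(ξ) = α for v_D ≤ ξ < v_F, and g(ξ) = λ·ξ^{−s} for 0 < ξ < v_D, and set J_FDpD = Q² / (2πh·∫_{r_w}^{r_e} r·g(v(r))·v(r)² dr), L = 2πh(r_e² − r_w²)², S_F[r_w, r_F] = ∫_{r_w}^{r_F} (α + β·A·(r_e² − r²)·r^{−1})·(r_e² − r²)²·r^{−1} dr, S_D[r_F, r_D] = α·∫_{r_F}^{r_D} (r_e² − r²)²·r^{−1} dr, and S_pD[r_D, r_e] = λ·A^{−s}·∫_{r_D}^{r_e} (r_e² − r²)^{2−s}·r^{s−1} dr. Then J_FDpD = L / (S_F[r_w, r_F] + S_D[r_F, r_D]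 + S_pD[r_D, r_e]). -/
open intervalIntegral MeasureTheory Set

set_option maxHeartbeats 1000000 in
/-- Proposition 3.2, Forchheimer–Darcy–pre-Darcy (FDpD) case, the main analytical
result: `J_FDpD = L / (S_F[r_w, r_F] + S_D[r_F, r_D] + S_pD[r_D, r_e])`. -/
theorem pi_FDpD
    (r_w r_e h Q α β lam s A : ℝ)
    (hrw : 0 < r_w) (hre : r_w < r_e) (hh : 0 < h) (hQ : 0 < Q)
    (hα : 0 < α) (hβ : 0 < β) (hlam : 0 < lam) (hs0 : 0 ≤ s) (hs1 : s < 1)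
    (hA : A = Q / (2 * Real.pi * h * (r_e ^ 2 - r_w ^ 2)))
    (v : ℝ → ℝ) (hv : ∀ r, v r = A * (r_e ^ 2 - r ^ 2) / r)
    (v_D v_F : ℝ) (hvD0 : 0 < v_D) (hvDF : v_D ≤ v_F) (hvFw : v_F ≤ v r_w)
    (r_F r_D : ℝ)
    (hrF : r_F ∈ Set.Icc r_w r_e) (hrD : r_D ∈ Set.Icc r_w r_e)
    (hvrF : v r_F = v_F) (hvrD : v r_D = v_D)
    (g : ℝ → ℝ)
    (hg : ∀ ξ : ℝ, g ξ =
      if v_F ≤ ξ then α + β * ξ else if v_D ≤ ξ then α else lam * ξ ^ (-s)) :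
    Q ^ 2 / (2 * Real.pi * h * ∫ r in r_w..r_e, r * g (v r) * v r ^ 2)
      = 2 * Real.pi * h * (r_e ^ 2 - r_w ^ 2) ^ 2 /
          ((∫ r in r_w..r_F,
              (α + β * A * (r_e ^ 2 - r ^ 2) * r⁻¹) * (r_e ^ 2 - r ^ 2) ^ 2 * r⁻¹) +
            α * (∫ r in r_F..r_D, (r_e ^ 2 - r ^ 2) ^ 2 * r⁻¹) +
            lam * A ^ (-s) *
              ∫ r in r_D..r_e, (r_e ^ 2 - r ^ 2) ^ (2 - s) * r ^ (s - 1)) := by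
  have pi_pos := Real.pi_pos
  have hre0 : 0 < r_e := hrw.trans hre
  have hD : (0:ℝ) < r_e ^ 2 - r_w ^ 2 := by nlinarith
  have hP : (0:ℝ) < 2 * Real.pi * h := by positivity
  have hA0 : 0 < A := by rw [hA]; positivity
  -- v is strictly decreasing on positive reals
  have hanti : ∀ x y : ℝ, 0 < x → x < y → v y < v x := by
    intro x y hx hxy
    have hy : 0 < y := hx.trans hxy
    have key : v x - v y = A * ((y - x) * (r_e ^ 2 + x * y)) / (x * y) := by
      rw [hv, hv]; field_simp; ring
    have hpos : 0 < A * ((y - x) * (r_e ^ 2 + x * y)) / (x * y) := by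
      apply div_pos
      · exact mul_pos hA0 (mul_pos (by linarith) (by nlinarith))
      · exact mul_pos hx hy
    linarith [key ▸ hpos]
  have hanti' : ∀ x y : ℝ, 0 < x → x ≤ y → v y ≤ v x := by
    intro x y hx hxy
    rcases eq_or_lt_of_le hxy with rfl | hlt
    · exact le_rfl
    · exact (hanti x y hx hlt).le
  have hrF0 : 0 < r_F := lt_of_lt_of_le hrw hrF.1
  have hrD0 : 0 < r_D := lt_of_lt_of_le hrw hrD.1
  have hFD : r_F ≤ r_D := by
    by_contra hcon
    push_neg at hcon
    have := hanti r_D r_F hrD0 hcon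
    rw [hvrF, hvrD] at this
    linarith
  have hvre : v r_e = 0 := by rw [hv]; simp
  have hDe : r_D < r_e := by
    rcases eq_or_lt_of_le hrD.2 with rfl | hlt
    · rw [hvre] at hvrD; linarith
    · exact hlt
  have hvpos : ∀ r : ℝ, 0 < r → r < r_e → 0 < v r := by
    intro r hr hre'
    rw [hv]
    have : 0 < r_e ^ 2 - r ^ 2 := by nlinarith
    positivity
  set b : ℝ → ℝ := fun r => r_e ^ 2 - r ^ 2 with hb
  set f : ℝ → ℝ := fun r => r * g (v r) * v r ^ 2 with hf
  set φ1 : ℝ → ℝ := fun r => (α + β * A * (r_e ^ 2 - r ^ 2) * r⁻¹) * (r_e ^ 2 - r ^ 2) ^ 2 * r⁻¹ with hφ1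
  set φ2 : ℝ → ℝ := fun r => (r_e ^ 2 - r ^ 2) ^ 2 * r⁻¹ with hφ2
  set φ3 : ℝ → ℝ := fun r => (r_e ^ 2 - r ^ 2) ^ (2 - s) * r ^ (s - 1) with hφ3
  -- pointwise identities
  have heq1 : ∀ r ∈ Set.uIcc r_w r_F, f r = A ^ 2 * φ1 r := by
    intro r hr
    rw [Set.uIcc_of_le hrF.1] at hr
    have hr0 : 0 < r := lt_of_lt_of_le hrw hr.1
    have hvF : v_F ≤ v r := hvrF ▸ hanti' r r_F hr0 hr.2
    have hgr : g (v r) = α + β * v r := by rw [hg (v r), if_pos hvF]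
    simp only [hf, hφ1]
    rw [hgr, hv r]
    field_simp
  have heq2 : ∀ r ∈ Set.Ioc r_F r_D, f r = A ^ 2 * (α * φ2 r) := by
    intro r hr
    have hr0 : 0 < r := hrF0.trans hr.1
    have h1 : v r < v_F := hvrF ▸ hanti r_F r hrF0 hr.1
    have h2 : v_D ≤ v r := hvrD ▸ hanti' r r_D hr0 hr.2
    have hgr : g (v r) = α := by rw [hg (v r), if_neg (not_le.2 h1), if_pos h2]
    simp only [hf, hφ2]
    rw [hgr, hv r]
    field_simp
  have heq3 : ∀ r ∈ Set.Ioc r_D r_e, f r = A ^ 2 * (lam * A ^ (-s) * φ3 r) := by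
    intro r hr
    have hr0 : 0 < r := hrD0.trans hr.1
    have h1 : v r < v_D := hvrD ▸ hanti r_D r hrD0 hr.1
    have h2 : ¬ v_F ≤ v r := not_le.2 (lt_of_lt_of_le h1 hvDF)
    have hgr : g (v r) = lam * v r ^ (-s) := by
      rw [hg (v r), if_neg h2, if_neg (not_le.2 h1)]
    simp only [hf, hφ3]
    rw [hgr]
    rcases eq_or_lt_of_le hr.2 with rfl | hlt
    · simp only [hvre, sub_self, Real.zero_rpow (show (2:ℝ) - s ≠ 0 by linarith)]
      ring
    · have hvr : 0 < v r := hvpos r hr0 hlt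
      have hbr : 0 < r_e ^ 2 - r ^ 2 := by nlinarith
      have key : r * (lam * v r ^ (-s)) * v r ^ 2 = lam * (v r ^ (2 - s) * r) := by
        have h2s : (2:ℝ) - s = -s + (2:ℕ) := by push_cast; ring
        rw [h2s, Real.rpow_add hvr, Real.rpow_natCast]
        ring
      have e3 : v r ^ (2 - s) = A ^ (2 - s) * (r_e ^ 2 - r ^ 2) ^ (2 - s) / r ^ (2 - s) := by
        rw [hv r, Real.div_rpow (by positivity) hr0.le, Real.mul_rpow hA0.le hbr.le]
      have eA : A ^ (2 - s) = A ^ 2 * A ^ (-s) := by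
        have h2s : (2:ℝ) - s = ((2:ℕ):ℝ) + (-s) := by push_cast; ring
        rw [h2s, Real.rpow_add hA0, Real.rpow_natCast]
      have er : r ^ (s - 1) = r / r ^ (2 - s) := by
        have h1s : s - 1 = 1 - (2 - s) := by ring
        rw [h1s, Real.rpow_sub hr0, Real.rpow_one]
      rw [key, e3, eA, er]
      ring
  -- continuity of the closed-form integrands
  have cpoly : Continuous fun r : ℝ => r_e ^ 2 - r ^ 2 := continuous_const.sub (continuous_pow 2)
  have hcψ1 : ContinuousOn (fun r => A ^ 2 * φ1 r) (Set.uIcc r_w r_F) := by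
    intro x hx
    rw [Set.uIcc_of_le hrF.1] at hx
    have hx0 : x ≠ 0 := (lt_of_lt_of_le hrw hx.1).ne'
    have cinv : ContinuousAt (fun r : ℝ => r⁻¹) x := continuousAt_inv₀ hx0
    exact (continuousAt_const.mul
      (((continuousAt_const.add ((continuousAt_const.mul cpoly.continuousAt).mul cinv)).mul
        ((cpoly.pow 2).continuousAt)).mul cinv)).continuousWithinAt
  have hcψ2 : ContinuousOn (fun r => A ^ 2 * (α * φ2 r)) (Set.uIcc r_F r_D) := by
    intro x hx
    rw [Set.uIcc_of_le hFD] at hx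
    have hx0 : x ≠ 0 := (lt_of_lt_of_le hrF0 hx.1).ne'
    have cinv : ContinuousAt (fun r : ℝ => r⁻¹) x := continuousAt_inv₀ hx0
    exact (continuousAt_const.mul (continuousAt_const.mul
      (((cpoly.pow 2).continuousAt).mul cinv))).continuousWithinAt
  have hcψ3 : ContinuousOn (fun r => A ^ 2 * (lam * A ^ (-s) * φ3 r)) (Set.uIcc r_D r_e) := by
    intro x hx
    rw [Set.uIcc_of_le hDe.le] at hx
    have hx0 : x ≠ 0 := (lt_of_lt_of_le hrD0 hx.1).ne'
    refine (continuousAt_const.mul (continuousAt_const.mul (ContinuousAt.mul ?_ ?_))).continuousWithinAt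
    · exact cpoly.continuousAt.rpow_const (Or.inr (by linarith))
    · exact continuousAt_id.rpow_const (Or.inl hx0)
  -- interval integrability of f on the three pieces
  have hint1 : IntervalIntegrable f volume r_w r_F := by
    refine (hcψ1.intervalIntegrable).congr ?_
    exact fun x hx => (heq1 x (Set.uIoc_subset_uIcc hx)).symm
  have hint2 : IntervalIntegrable f volume r_F r_D := by
    refine (hcψ2.intervalIntegrable).congr ?_
    refine fun x hx => ?_
    rw [Set.uIoc_of_le hFD] at hx
    exact (heq2 x hx).symm
  have hint3 : IntervalIntegrable f volume r_D r_e := by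
    refine (hcψ3.intervalIntegrable).congr ?_
    refine fun x hx => ?_
    rw [Set.uIoc_of_le hDe.le] at hx
    exact (heq3 x hx).symm
  -- splitting the integral
  have hsplit : (∫ r in r_w..r_e, f r)
      = (∫ r in r_w..r_F, f r) + (∫ r in r_F..r_D, f r) + (∫ r in r_D..r_e, f r) := by
    rw [integral_add_adjacent_intervals hint1 hint2,
      integral_add_adjacent_intervals (hint1.trans hint2) hint3]
  have hI1 : (∫ r in r_w..r_F, f r) = A ^ 2 * ∫ r in r_w..r_F, φ1 r :=
    (integral_congr heq1).trans (integral_const_mul _ _)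
  have hI2 : (∫ r in r_F..r_D, f r) = A ^ 2 * (α * ∫ r in r_F..r_D, φ2 r) := by
    rw [show A ^ 2 * (α * ∫ r in r_F..r_D, φ2 r) = ∫ r in r_F..r_D, A ^ 2 * (α * φ2 r) by
      rw [intervalIntegral.integral_const_mul, intervalIntegral.integral_const_mul]]
    refine integral_congr_ae (Filter.Eventually.of_forall (fun x hx => ?_))
    rw [Set.uIoc_of_le hFD] at hx
    exact heq2 x hx
  have hI3 : (∫ r in r_D..r_e, f r)
      = A ^ 2 * (lam * A ^ (-s) * ∫ r in r_D..r_e, φ3 r) := by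
    rw [show A ^ 2 * (lam * A ^ (-s) * ∫ r in r_D..r_e, φ3 r)
        = ∫ r in r_D..r_e, A ^ 2 * (lam * A ^ (-s) * φ3 r) by
      rw [intervalIntegral.integral_const_mul, intervalIntegral.integral_const_mul]]
    refine integral_congr_ae (Filter.Eventually.of_forall (fun x hx => ?_))
    rw [Set.uIoc_of_le hDe.le] at hx
    exact heq3 x hx
  -- final algebra
  have halg : ∀ t : ℝ, Q ^ 2 / (2 * Real.pi * h * (A ^ 2 * t))
      = 2 * Real.pi * h * (r_e ^ 2 - r_w ^ 2) ^ 2 / t := by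
    intro t
    rcases eq_or_ne t 0 with rfl | ht
    · simp
    · rw [hA]
      field_simp
  rw [hsplit, hI1, hI2, hI3,
    show A ^ 2 * (∫ r in r_w..r_F, φ1 r) + A ^ 2 * (α * ∫ r in r_F..r_D, φ2 r)
        + A ^ 2 * (lam * A ^ (-s) * ∫ r in r_D..r_e, φ3 r)
      = A ^ 2 * ((∫ r in r_w..r_F, φ1 r) + α * (∫ r in r_F..r_D, φ2 r)
        + lam * A ^ (-s) * ∫ r in r_D..r_e, φ3 r) from by ring]
  exact halg _
end

section
/- Let 0 < r_w < r_e, h > 0, Q > 0, α > 0, λ > 0, 0 ≤ s < 1, A = Q/(2πh(r_e² − r_w²)), v(r) = A·(r_e² − r²)/r. Suppose 0 < v_D ≤ v(r_w) and r_D ∈ [r_w, r_e] satisfies v(r_D) = v_D. Define g(ξ) = α for ξ ≥ v_D and g(ξ) = λ·ξ^{−s} for 0 < ξ < v_D, J_DDpD = Q²/(2πh·∫_{r_w}^{r_e} r·g(v(r))·v(r)² dr), J_D = Q²/(2πh·∫_{r_w}^{r_e} r·α·v(r)² dr), S_D[r_1, r_2] = α·∫_{r_1}^{r_2} (r_e²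 − r²)²·r^{−1} dr and S_pD[r_D, r_e] = λ·A^{−s}·∫_{r_D}^{r_e} (r_e² − r²)^{2−s}·r^{s−1} dr. Then J_DDpD = J_D · S_D[r_w, r_e] / (S_D[r_w, r_D] + S_pD[r_D, r_e]). -/
set_option maxHeartbeats 1000000 in
/-- Proposition 3.3, Darcy–Darcy–pre-Darcy (DDpD) case:
`J_DDpD = J_D · S_D[r_w, r_e] / (S_D[r_w, r_D] + S_pD[r_D, r_e])`. -/
theorem pi_DDpD_through_darcy
    (r_w r_e h Q α lam s A : ℝ)
    (hrw : 0 < r_w) (hre : r_w < r_e) (hh : 0 < h) (hQ : 0 < Q)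
    (hα : 0 < α) (hlam : 0 < lam) (hs0 : 0 ≤ s) (hs1 : s < 1)
    (hA : A = Q / (2 * Real.pi * h * (r_e ^ 2 - r_w ^ 2)))
    (v : ℝ → ℝ) (hv : ∀ r, v r = A * (r_e ^ 2 - r ^ 2) / r)
    (v_D : ℝ) (hvD0 : 0 < v_D) (hvDw : v_D ≤ v r_w)
    (r_D : ℝ) (hrD : r_D ∈ Set.Icc r_w r_e) (hvrD : v r_D = v_D)
    (g : ℝ → ℝ) (hg : ∀ ξ : ℝ, g ξ = if v_D ≤ ξ then α else lam * ξ ^ (-s)) :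
    Q ^ 2 / (2 * Real.pi * h * ∫ r in r_w..r_e, r * g (v r) * v r ^ 2)
      = (Q ^ 2 / (2 * Real.pi * h * ∫ r in r_w..r_e, r * α * v r ^ 2)) *
          (α * ∫ r in r_w..r_e, (r_e ^ 2 - r ^ 2) ^ 2 * r⁻¹) /
          (α * (∫ r in r_w..r_D, (r_e ^ 2 - r ^ 2) ^ 2 * r⁻¹) +
            lam * A ^ (-s) *
              ∫ r in r_D..r_e, (r_e ^ 2 - r ^ 2) ^ (2 - s) * r ^ (s - 1)) := by
  obtain ⟨hrDw, hrDe⟩ := hrD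
  have hπ : 0 < Real.pi := Real.pi_pos
  have hre2 : (0:ℝ) < r_e ^ 2 - r_w ^ 2 := by nlinarith
  have hA0 : 0 < A := by rw [hA]; positivity
  have hrD0 : 0 < r_D := lt_of_lt_of_le hrw hrDw
  -- strict antitonicity of v
  have hvlt : ∀ x y : ℝ, 0 < x → x < y → v y < v x := by
    intro x y hx hxy
    rw [hv, hv]
    rw [div_lt_div_iff₀ (by linarith) hx]
    nlinarith [mul_pos hA0 (mul_pos (sub_pos.mpr hxy)
      (add_pos_of_nonneg_of_pos (sq_nonneg r_e) (mul_pos hx (hx.trans hxy))))]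
  have hvle : ∀ x y : ℝ, 0 < x → x ≤ y → v y ≤ v x := by
    intro x y hx hxy
    rcases eq_or_lt_of_le hxy with rfl | hlt
    · exact le_refl _
    · exact le_of_lt (hvlt x y hx hlt)
  have hvpos : ∀ r : ℝ, 0 < r → r < r_e → 0 < v r := by
    intro r hr hrlt
    rw [hv]
    have h1 : 0 < r_e ^ 2 - r ^ 2 := by nlinarith
    positivity
  -- value of g on the two zones
  have hg1 : ∀ r ∈ Set.uIcc r_w r_D, g (v r) = α := by
    intro r hr
    rw [Set.uIcc_of_le hrDw] at hr
    have : v_D ≤ v r := by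
      rw [← hvrD]; exact hvle r r_D (lt_of_lt_of_le hrw hr.1) hr.2
    rw [hg, if_pos this]
  have hg2 : ∀ r ∈ Set.Ioc r_D r_e, g (v r) = lam * (v r) ^ (-s) := by
    intro r hr
    have : v r < v_D := by rw [← hvrD]; exact hvlt r_D r hrD0 hr.1
    rw [hg, if_neg (not_le.mpr this)]
  -- pointwise identities
  have key1 : ∀ r : ℝ, r_w ≤ r → r * α * v r ^ 2 = α * A ^ 2 * ((r_e ^ 2 - r ^ 2) ^ 2 * r⁻¹) := by
    intro r hr
    have hr0 : r ≠ 0 := ne_of_gt (lt_of_lt_of_le hrw hr)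
    rw [hv]
    field_simp
  have key2 : ∀ r ∈ Set.Ioc r_D r_e,
      r * (lam * (v r) ^ (-s)) * v r ^ 2
        = A ^ 2 * (lam * A ^ (-s) * ((r_e ^ 2 - r ^ 2) ^ (2 - s) * r ^ (s - 1))) := by
    intro r hr
    have hr0 : 0 < r := lt_of_lt_of_le hrD0 (le_of_lt hr.1)
    have hu : 0 ≤ r_e ^ 2 - r ^ 2 := by nlinarith [hr.2, hr0]
    rcases eq_or_lt_of_le hu with hu0 | hupos
    · -- r = r_e, everything is zero
      have hvr : v r = 0 := by rw [hv, ← hu0]; simp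
      rw [hvr, ← hu0]
      have h2s : (2 : ℝ) - s ≠ 0 := by linarith
      rw [Real.zero_rpow h2s]
      ring
    · have hvr : 0 < v r := by rw [hv]; positivity
      have e1 : (v r) ^ (-s) * v r ^ 2 = (v r) ^ ((2:ℝ) - s) := by
        rw [← Real.rpow_natCast (v r) 2, ← Real.rpow_add hvr]
        norm_num
        congr 1
        ring
      have e2 : (v r) ^ ((2:ℝ) - s)
          = A ^ ((2:ℝ) - s) * (r_e ^ 2 - r ^ 2) ^ ((2:ℝ) - s) * (r ^ ((2:ℝ) - s))⁻¹ := by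
        rw [hv, div_eq_mul_inv, Real.mul_rpow (by positivity) (by positivity),
          Real.mul_rpow (le_of_lt hA0) (le_of_lt hupos), Real.inv_rpow (le_of_lt hr0)]
      have e3 : A ^ ((2:ℝ) - s) = A ^ 2 * A ^ (-s) := by
        rw [Real.rpow_sub hA0, Real.rpow_neg (le_of_lt hA0), div_eq_mul_inv]
        congr 1
        rw [show ((2:ℝ)) = ((2:ℕ):ℝ) by norm_num, Real.rpow_natCast]
      have e4 : r * (r ^ ((2:ℝ) - s))⁻¹ = r ^ (s - 1) := by
        rw [← Real.rpow_neg (le_of_lt hr0)]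
        have h5 := Real.rpow_add hr0 1 (-(2 - s))
        rw [Real.rpow_one] at h5
        rw [← h5]
        congr 1
        ring
      calc r * (lam * (v r) ^ (-s)) * v r ^ 2
          = lam * ((v r) ^ (-s) * v r ^ 2) * r := by ring
        _ = lam * ((v r) ^ ((2:ℝ) - s)) * r := by rw [e1]
        _ = lam * (A ^ ((2:ℝ) - s) * (r_e ^ 2 - r ^ 2) ^ ((2:ℝ) - s) * (r ^ ((2:ℝ) - s))⁻¹) * r := by
            rw [e2]
        _ = lam * A ^ ((2:ℝ) - s) * (r_e ^ 2 - r ^ 2) ^ ((2:ℝ) - s) * (r * (r ^ ((2:ℝ) - s))⁻¹) := by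
            ring
        _ = _ := by rw [e3, e4]; ring
  -- integrability of the model integrands
  have hsub : ∀ a b : ℝ, r_w ≤ a → a ≤ b → b ≤ r_e → ∀ x ∈ Set.uIcc a b, r_w ≤ x ∧ x ≤ r_e := by
    intro a b ha hab hb x hx
    rw [Set.uIcc_of_le hab] at hx
    exact ⟨le_trans ha hx.1, le_trans hx.2 hb⟩
  have hintF1 : ∀ a b : ℝ, r_w ≤ a → a ≤ b → b ≤ r_e →
      IntervalIntegrable (fun r : ℝ => (r_e ^ 2 - r ^ 2) ^ 2 * r⁻¹)
        MeasureTheory.volume a b := by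
    intro a b ha hab hb
    apply ContinuousOn.intervalIntegrable
    apply ContinuousOn.mul (by fun_prop)
    exact ContinuousOn.inv₀ continuousOn_id fun x hx =>
      ne_of_gt (lt_of_lt_of_le hrw (hsub a b ha hab hb x hx).1)
  have hintF2 : ∀ a b : ℝ, r_w ≤ a → a ≤ b → b ≤ r_e →
      IntervalIntegrable (fun r : ℝ => (r_e ^ 2 - r ^ 2) ^ (2 - s) * r ^ (s - 1))
        MeasureTheory.volume a b := by
    intro a b ha hab hb
    apply ContinuousOn.intervalIntegrable
    apply ContinuousOn.mul
    · apply ContinuousOn.rpow_const (by fun_prop)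
      intro x hx
      right; linarith
    · apply ContinuousOn.rpow_const continuousOn_id
      intro x hx
      left
      exact ne_of_gt (lt_of_lt_of_le hrw (hsub a b ha hab hb x hx).1)
  -- integrability of the physical integrand on the two pieces
  have hi1 : IntervalIntegrable (fun r => r * g (v r) * v r ^ 2)
      MeasureTheory.volume r_w r_D := by
    apply IntervalIntegrable.congr_ae
      (((hintF1 r_w r_D le_rfl hrDw hrDe).const_mul (α * A ^ 2)))
    filter_upwards [MeasureTheory.ae_restrict_mem measurableSet_uIoc] with r hr
    have hr' : r ∈ Set.uIcc r_w r_D := Set.uIoc_subset_uIcc hr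
    have hrwle : r_w ≤ r := ((Set.uIcc_of_le hrDw ▸ hr') : r ∈ Set.Icc r_w r_D).1
    rw [hg1 r hr']
    exact (key1 r hrwle).symm
  have hi2 : IntervalIntegrable (fun r => r * g (v r) * v r ^ 2)
      MeasureTheory.volume r_D r_e := by
    apply IntervalIntegrable.congr_ae
      (((hintF2 r_D r_e hrDw hrDe le_rfl).const_mul
        (A ^ 2 * (lam * A ^ (-s)))))
    filter_upwards [MeasureTheory.ae_restrict_mem measurableSet_uIoc] with r hr
    have hr' : r ∈ Set.Ioc r_D r_e := Set.uIoc_of_le hrDe ▸ hr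
    rw [hg2 r hr']
    rw [key2 r hr']
    ring
  -- splitting and rewriting the three integrals
  have hsplit : (∫ r in r_w..r_e, r * g (v r) * v r ^ 2)
      = (∫ r in r_w..r_D, r * g (v r) * v r ^ 2)
        + ∫ r in r_D..r_e, r * g (v r) * v r ^ 2 :=
    (intervalIntegral.integral_add_adjacent_intervals hi1 hi2).symm
  have hp1 : (∫ r in r_w..r_D, r * g (v r) * v r ^ 2)
      = α * A ^ 2 * ∫ r in r_w..r_D, (r_e ^ 2 - r ^ 2) ^ 2 * r⁻¹ := by
    rw [← intervalIntegral.integral_const_mul]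
    apply intervalIntegral.integral_congr
    intro r hr
    have hrwle : r_w ≤ r := ((Set.uIcc_of_le hrDw ▸ hr) : r ∈ Set.Icc r_w r_D).1
    simp only
    rw [hg1 r hr]
    exact key1 r hrwle
  have hp2 : (∫ r in r_D..r_e, r * g (v r) * v r ^ 2)
      = A ^ 2 * (lam * A ^ (-s))
          * ∫ r in r_D..r_e, (r_e ^ 2 - r ^ 2) ^ (2 - s) * r ^ (s - 1) := by
    rw [← intervalIntegral.integral_const_mul]
    apply intervalIntegral.integral_congr_ae
    apply Filter.Eventually.of_forall
    intro r hr
    have hr' : r ∈ Set.Ioc r_D r_e := Set.uIoc_of_le hrDe ▸ hr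
    rw [hg2 r hr', key2 r hr']
    ring
  have hfull : (∫ r in r_w..r_e, r * α * v r ^ 2)
      = α * A ^ 2 * ∫ r in r_w..r_e, (r_e ^ 2 - r ^ 2) ^ 2 * r⁻¹ := by
    rw [← intervalIntegral.integral_const_mul]
    apply intervalIntegral.integral_congr
    intro r hr
    have hrwle : r_w ≤ r := ((Set.uIcc_of_le (le_of_lt hre) ▸ hr) : r ∈ Set.Icc r_w r_e).1
    simp only
    exact key1 r hrwle
  -- positivity of the integrals
  have hIF : 0 < ∫ r in r_w..r_e, (r_e ^ 2 - r ^ 2) ^ 2 * r⁻¹ := by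
    apply intervalIntegral.intervalIntegral_pos_of_pos_on
      (hintF1 r_w r_e le_rfl (le_of_lt hre) le_rfl) _ hre
    intro x hx
    have hx0 : 0 < x := lt_trans hrw hx.1
    have : 0 < r_e ^ 2 - x ^ 2 := by nlinarith [hx.2]
    positivity
  have hD : 0 < α * (∫ r in r_w..r_D, (r_e ^ 2 - r ^ 2) ^ 2 * r⁻¹)
      + lam * A ^ (-s) * ∫ r in r_D..r_e, (r_e ^ 2 - r ^ 2) ^ (2 - s) * r ^ (s - 1) := by
    have hApos : 0 < A ^ (-s) := Real.rpow_pos_of_pos hA0 (-s)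
    rcases eq_or_lt_of_le hrDw with heq | hlt
    · have hI2 : 0 < ∫ r in r_D..r_e, (r_e ^ 2 - r ^ 2) ^ (2 - s) * r ^ (s - 1) := by
        rw [← heq]
        apply intervalIntegral.intervalIntegral_pos_of_pos_on
          (hintF2 r_w r_e le_rfl (le_of_lt hre) le_rfl) _ hre
        intro x hx
        have hx0 : 0 < x := lt_trans hrw hx.1
        have hxe : 0 < r_e ^ 2 - x ^ 2 := by nlinarith [hx.2]
        exact mul_pos (Real.rpow_pos_of_pos hxe _) (Real.rpow_pos_of_pos hx0 _)
      have hI1 : (∫ r in r_w..r_D, (r_e ^ 2 - r ^ 2) ^ 2 * r⁻¹) = 0 := by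
        rw [heq, intervalIntegral.integral_same]
      rw [hI1]
      have := mul_pos (mul_pos hlam hApos) hI2
      linarith
    · have hI1 : 0 < ∫ r in r_w..r_D, (r_e ^ 2 - r ^ 2) ^ 2 * r⁻¹ := by
        apply intervalIntegral.intervalIntegral_pos_of_pos_on
          (hintF1 r_w r_D le_rfl hrDw hrDe) _ hlt
        intro x hx
        have hx0 : 0 < x := lt_trans hrw hx.1
        have hxe : 0 < r_e ^ 2 - x ^ 2 := by nlinarith [lt_of_lt_of_le hx.2 hrDe]
        positivity
      have hI2 : 0 ≤ ∫ r in r_D..r_e, (r_e ^ 2 - r ^ 2) ^ (2 - s) * r ^ (s - 1) := by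
        apply intervalIntegral.integral_nonneg hrDe
        intro x hx
        have hx0 : 0 ≤ x := le_trans (le_of_lt hrD0) hx.1
        have hxe : 0 ≤ r_e ^ 2 - x ^ 2 := by nlinarith [hx.2]
        exact mul_nonneg (Real.rpow_nonneg hxe _) (Real.rpow_nonneg hx0 _)
      have h1 := mul_pos hα hI1
      have h2 := mul_nonneg (le_of_lt (mul_pos hlam hApos)) hI2
      linarith
  -- final algebra
  rw [hsplit, hp1, hp2, hfull]
  set I1 := ∫ r in r_w..r_D, (r_e ^ 2 - r ^ 2) ^ 2 * r⁻¹ with hI1def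
  set I2 := ∫ r in r_D..r_e, (r_e ^ 2 - r ^ 2) ^ (2 - s) * r ^ (s - 1) with hI2def
  set IF := ∫ r in r_w..r_e, (r_e ^ 2 - r ^ 2) ^ 2 * r⁻¹ with hIFdef
  have hDne : α * I1 + lam * A ^ (-s) * I2 ≠ 0 := ne_of_gt hD
  have hcomb : α * A ^ 2 * I1 + A ^ 2 * (lam * A ^ (-s)) * I2
      = A ^ 2 * (α * I1 + lam * A ^ (-s) * I2) := by ring
  rw [hcomb]
  rw [eq_div_iff hDne, div_mul_eq_mul_div, div_mul_eq_mul_div, eq_div_iff]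
  · field_simp
  · positivity
end

section
/- Let 0 < r_w < r_e, h > 0, Q > 0, α > 0, β > 0, λ > 0, 0 ≤ s < 1, A = Q/(2πh(r_e² − r_w²)), v(r) = A·(r_e² − r²)/r. Suppose 0 < v_D ≤ v_F ≤ v(r_w) and r_F, r_D ∈ [r_w, r_e] satisfy v(r_F) = v_F and v(r_D) = v_D. Define g(ξ) = α + βξ for ξ ≥ v_F, g(ξ) = α for v_D ≤ ξ < v_F, g(ξ) = λ·ξ^{−s} for 0 < ξ < v_D, J_FDpD = Q²/(2πh·∫_{r_w}^{r_e} r·g(v(r))·v(r)² dr), J_D = Q²/(2πh·∫_{r_w}^{r_e} r·α·v(r)² dr), S_D[r_1, r_2] = α·∫_{r_1}^{r_2} (r_e² − r²)²·r^{−1} dr, S_F[r_w, r_F] = ∫_{r_w}^{r_F} (α + β·A·(r_e² − r²)·r^{−1})·(r_e² − r²)²·r^{−1} dr, and S_pD[r_D, r_e] = λ·A^{−s}·∫_{r_D}^{r_e} (r_e² − r²)^{2−s}·r^{s−1} dr. Then J_FDpD = J_D · S_D[r_w, r_e] / (S_F[r_w, r_F] + S_D[r_F, r_D] + S_pD[r_D,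 r_e]). -/
set_option maxHeartbeats 800000

open MeasureTheory intervalIntegral Set

/-- Proposition 3.3, Forchheimer–Darcy–pre-Darcy (FDpD) case:
`J_FDpD = J_D · S_D[r_w, r_e] / (S_F[r_w, r_F] + S_D[r_F, r_D] + S_pD[r_D, r_e])`. -/
theorem pi_FDpD_through_darcy
    (r_w r_e h Q α β lam s A : ℝ)
    (hrw : 0 < r_w) (hre : r_w < r_e) (hh : 0 < h) (hQ : 0 < Q)
    (hα : 0 < α) (hβ : 0 < β) (hlam : 0 < lam) (hs0 : 0 ≤ s) (hs1 : s < 1)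
    (hA : A = Q / (2 * Real.pi * h * (r_e ^ 2 - r_w ^ 2)))
    (v : ℝ → ℝ) (hv : ∀ r, v r = A * (r_e ^ 2 - r ^ 2) / r)
    (v_D v_F : ℝ) (hvD0 : 0 < v_D) (hvDF : v_D ≤ v_F) (hvFw : v_F ≤ v r_w)
    (r_F r_D : ℝ)
    (hrF : r_F ∈ Set.Icc r_w r_e) (hrD : r_D ∈ Set.Icc r_w r_e)
    (hvrF : v r_F = v_F) (hvrD : v r_D = v_D)
    (g : ℝ → ℝ)
    (hg : ∀ ξ : ℝ, g ξ =
      if v_F ≤ ξ then α + β * ξ else if v_D ≤ ξ then α else lam * ξ ^ (-s)) :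
    Q ^ 2 / (2 * Real.pi * h * ∫ r in r_w..r_e, r * g (v r) * v r ^ 2)
      = (Q ^ 2 / (2 * Real.pi * h * ∫ r in r_w..r_e, r * α * v r ^ 2)) *
          (α * ∫ r in r_w..r_e, (r_e ^ 2 - r ^ 2) ^ 2 * r⁻¹) /
          ((∫ r in r_w..r_F,
              (α + β * A * (r_e ^ 2 - r ^ 2) * r⁻¹) * (r_e ^ 2 - r ^ 2) ^ 2 * r⁻¹) +
            α * (∫ r in r_F..r_D, (r_e ^ 2 - r ^ 2) ^ 2 * r⁻¹) +
            lam * A ^ (-s) *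
              ∫ r in r_D..r_e, (r_e ^ 2 - r ^ 2) ^ (2 - s) * r ^ (s - 1)) := by
  have hπ : 0 < Real.pi := Real.pi_pos
  have hre0 : 0 < r_e := lt_trans hrw hre
  have hew : 0 < r_e ^ 2 - r_w ^ 2 := by nlinarith
  have hApos : 0 < A := by
    rw [hA]; exact div_pos hQ (mul_pos (by positivity) hew)
  have hanti : ∀ a b : ℝ, 0 < a → a < b → v b < v a := by
    intro a b ha hab
    have hb : 0 < b := ha.trans hab
    rw [hv a, hv b, div_lt_div_iff₀ hb ha]
    nlinarith [mul_pos hApos (mul_pos (sub_pos.mpr hab)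
      (show (0:ℝ) < r_e ^ 2 + a * b by nlinarith))]
  have hrF0 : 0 < r_F := lt_of_lt_of_le hrw hrF.1
  have hrD0 : 0 < r_D := lt_of_lt_of_le hrw hrD.1
  have hFD : r_F ≤ r_D := by
    by_contra hcon
    push_neg at hcon
    have h1 := hanti r_D r_F hrD0 hcon
    rw [hvrF, hvrD] at h1
    linarith
  -- pointwise descriptions on the three pieces
  have hEq1 : ∀ r ∈ Icc r_w r_F, r * g (v r) * v r ^ 2
      = A ^ 2 * ((α + β * A * (r_e ^ 2 - r ^ 2) * r⁻¹) * (r_e ^ 2 - r ^ 2) ^ 2 * r⁻¹) := by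
    intro r hr
    have hr0 : 0 < r := lt_of_lt_of_le hrw hr.1
    have hge : v_F ≤ v r := by
      rcases eq_or_lt_of_le hr.2 with h1 | h1
      · rw [h1, hvrF]
      · have := hanti r r_F hr0 h1
        rw [hvrF] at this; linarith
    have hrne : r ≠ 0 := ne_of_gt hr0
    rw [hg, if_pos hge, hv]
    field_simp
  have hEq2 : ∀ r ∈ Ioc r_F r_D, r * g (v r) * v r ^ 2
      = A ^ 2 * α * ((r_e ^ 2 - r ^ 2) ^ 2 * r⁻¹) := by
    intro r hr
    have hr0 : 0 < r := hrF0.trans hr.1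
    have h1 : v r < v_F := by
      have := hanti r_F r hrF0 hr.1
      rwa [hvrF] at this
    have h2 : v_D ≤ v r := by
      rcases eq_or_lt_of_le hr.2 with h3 | h3
      · rw [h3, hvrD]
      · have := hanti r r_D hr0 h3
        rw [hvrD] at this; linarith
    have hrne : r ≠ 0 := ne_of_gt hr0
    rw [hg, if_neg (not_le.mpr h1), if_pos h2, hv]
    field_simp
  have hEq3 : ∀ r ∈ Ioc r_D r_e, r * g (v r) * v r ^ 2
      = A ^ 2 * (lam * A ^ (-s)) * ((r_e ^ 2 - r ^ 2) ^ (2 - s) * r ^ (s - 1)) := by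
    intro r hr
    have hr0 : 0 < r := hrD0.trans hr.1
    rcases eq_or_lt_of_le hr.2 with heq | hlt
    · subst heq
      have hv0 : v r = 0 := by rw [hv, sub_self, mul_zero, zero_div]
      have hz : (r ^ 2 - r ^ 2 : ℝ) ^ ((2:ℝ) - s) = 0 := by
        rw [sub_self]; exact Real.zero_rpow (by linarith)
      rw [hv0, hz]
      ring
    · have hu : 0 < r_e ^ 2 - r ^ 2 := by nlinarith
      have hvlt : v r < v_D := by
        have := hanti r_D r hrD0 hr.1
        rwa [hvrD] at this
      have hvpos : 0 < v r := by
        rw [hv]; exact div_pos (mul_pos hApos hu) hr0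
      rw [hg, if_neg (not_le.mpr (lt_of_lt_of_le hvlt hvDF)), if_neg (not_le.mpr hvlt), hv]
      have h2s : (r_e ^ 2 - r ^ 2 : ℝ) ^ ((2:ℝ) - s)
          = (r_e ^ 2 - r ^ 2) ^ 2 * (r_e ^ 2 - r ^ 2) ^ (-s) := by
        rw [show (2:ℝ) - s = 2 + (-s) by ring, Real.rpow_add hu, Real.rpow_two]
      have hs1' : r ^ (s - 1) = r ^ s * r⁻¹ := by
        rw [show s - 1 = s + (-1) by ring, Real.rpow_add hr0, Real.rpow_neg_one]
      have hmain : (A * (r_e ^ 2 - r ^ 2) / r) ^ (-s)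
          = A ^ (-s) * (r_e ^ 2 - r ^ 2) ^ (-s) / r ^ (-s) := by
        rw [Real.div_rpow (by positivity) hr0.le, Real.mul_rpow hApos.le hu.le]
      have hrs : r ^ (-s) = (r ^ s)⁻¹ := Real.rpow_neg hr0.le s
      have hrspos : 0 < r ^ s := Real.rpow_pos_of_pos hr0 s
      rw [hmain, h2s, hs1', hrs]
      have hrne : r ≠ 0 := ne_of_gt hr0
      have hrsne : r ^ s ≠ 0 := ne_of_gt hrspos
      field_simp
  have hEqD : ∀ r ∈ Icc r_w r_e, r * α * v r ^ 2
      = A ^ 2 * α * ((r_e ^ 2 - r ^ 2) ^ 2 * r⁻¹) := by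
    intro r hr
    have hr0 : 0 < r := lt_of_lt_of_le hrw hr.1
    have hrne : r ≠ 0 := ne_of_gt hr0
    rw [hv]
    field_simp
  -- continuity of the model integrands on [r_w, r_e]
  have hx0 : ∀ x ∈ Icc r_w r_e, x ≠ 0 := fun x hx => ne_of_gt (lt_of_lt_of_le hrw hx.1)
  have hinv : ContinuousOn (fun x : ℝ => x⁻¹) (Icc r_w r_e) := continuousOn_id.inv₀ hx0
  have hq : ContinuousOn (fun x : ℝ => r_e ^ 2 - x ^ 2) (Icc r_w r_e) :=
    (continuous_const.sub (continuous_pow 2)).continuousOn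
  have hc1 : ContinuousOn (fun r : ℝ =>
      A ^ 2 * ((α + β * A * (r_e ^ 2 - r ^ 2) * r⁻¹) * (r_e ^ 2 - r ^ 2) ^ 2 * r⁻¹))
      (Icc r_w r_e) :=
    continuousOn_const.mul
      (((continuousOn_const.add ((continuousOn_const.mul hq).mul hinv)).mul (hq.pow 2)).mul hinv)
  have hc2 : ContinuousOn (fun r : ℝ => A ^ 2 * α * ((r_e ^ 2 - r ^ 2) ^ 2 * r⁻¹))
      (Icc r_w r_e) := continuousOn_const.mul ((hq.pow 2).mul hinv)
  have hc3 : ContinuousOn (fun r : ℝ =>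
      A ^ 2 * (lam * A ^ (-s)) * ((r_e ^ 2 - r ^ 2) ^ (2 - s) * r ^ (s - 1)))
      (Icc r_w r_e) := by
    refine continuousOn_const.mul (ContinuousOn.mul ?_ ?_)
    · exact hq.rpow_const (fun x hx => Or.inr (by linarith))
    · exact continuousOn_id.rpow_const (fun x hx => Or.inl (hx0 x hx))
  -- integrability of the original integrand on each piece
  have hint1 : IntervalIntegrable (fun r => r * g (v r) * v r ^ 2) volume r_w r_F := by
    rw [intervalIntegrable_iff_integrableOn_Ioc_of_le hrF.1]
    exact (((hc1.mono (Icc_subset_Icc le_rfl hrF.2)).integrableOn_Icc).mono_set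
      Ioc_subset_Icc_self).congr_fun
      (fun x hx => (hEq1 x (Ioc_subset_Icc_self hx)).symm) measurableSet_Ioc
  have hint2 : IntervalIntegrable (fun r => r * g (v r) * v r ^ 2) volume r_F r_D := by
    rw [intervalIntegrable_iff_integrableOn_Ioc_of_le hFD]
    exact (((hc2.mono (Icc_subset_Icc hrF.1 hrD.2)).integrableOn_Icc).mono_set
      Ioc_subset_Icc_self).congr_fun (fun x hx => (hEq2 x hx).symm) measurableSet_Ioc
  have hint3 : IntervalIntegrable (fun r => r * g (v r) * v r ^ 2) volume r_D r_e := by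
    rw [intervalIntegrable_iff_integrableOn_Ioc_of_le hrD.2]
    exact (((hc3.mono (Icc_subset_Icc hrD.1 le_rfl)).integrableOn_Icc).mono_set
      Ioc_subset_Icc_self).congr_fun (fun x hx => (hEq3 x hx).symm) measurableSet_Ioc
  -- splitting
  have hsplit : (∫ r in r_w..r_e, r * g (v r) * v r ^ 2)
      = (∫ r in r_w..r_F, r * g (v r) * v r ^ 2) + (∫ r in r_F..r_D, r * g (v r) * v r ^ 2)
        + (∫ r in r_D..r_e, r * g (v r) * v r ^ 2) := by
    rw [integral_add_adjacent_intervals hint1 hint2,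
      integral_add_adjacent_intervals (hint1.trans hint2) hint3]
  -- evaluating each piece
  have e1 : (∫ r in r_w..r_F, r * g (v r) * v r ^ 2)
      = A ^ 2 * ∫ r in r_w..r_F,
          (α + β * A * (r_e ^ 2 - r ^ 2) * r⁻¹) * (r_e ^ 2 - r ^ 2) ^ 2 * r⁻¹ := by
    rw [← intervalIntegral.integral_const_mul]
    apply integral_congr
    intro x hx
    rw [uIcc_of_le hrF.1] at hx
    exact hEq1 x hx
  have e2 : (∫ r in r_F..r_D, r * g (v r) * v r ^ 2)
      = A ^ 2 * α * ∫ r in r_F..r_D, (r_e ^ 2 - r ^ 2) ^ 2 * r⁻¹ := by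
    rw [← intervalIntegral.integral_const_mul]
    apply intervalIntegral.integral_congr_ae
    filter_upwards with x hx
    rw [uIoc_of_le hFD] at hx
    exact hEq2 x hx
  have e3 : (∫ r in r_D..r_e, r * g (v r) * v r ^ 2)
      = A ^ 2 * (lam * A ^ (-s)) * ∫ r in r_D..r_e, (r_e ^ 2 - r ^ 2) ^ (2 - s) * r ^ (s - 1) := by
    rw [← intervalIntegral.integral_const_mul]
    apply intervalIntegral.integral_congr_ae
    filter_upwards with x hx
    rw [uIoc_of_le hrD.2] at hx
    exact hEq3 x hx
  have keyD : (∫ r in r_w..r_e, r * α * v r ^ 2)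
      = A ^ 2 * α * ∫ r in r_w..r_e, (r_e ^ 2 - r ^ 2) ^ 2 * r⁻¹ := by
    rw [← intervalIntegral.integral_const_mul]
    apply integral_congr
    intro x hx
    rw [uIcc_of_le hre.le] at hx
    exact hEqD x hx
  -- positivity of the Darcy integral
  have hintS : IntervalIntegrable (fun r : ℝ => (r_e ^ 2 - r ^ 2) ^ 2 * r⁻¹) volume r_w r_e := by
    apply ContinuousOn.intervalIntegrable
    rw [uIcc_of_le hre.le]
    exact (hq.pow 2).mul hinv
  have hSpos : 0 < ∫ r in r_w..r_e, (r_e ^ 2 - r ^ 2) ^ 2 * r⁻¹ := by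
    apply intervalIntegral_pos_of_pos_on hintS _ hre
    intro x hx
    have hx0' : 0 < x := hrw.trans hx.1
    have hux : 0 < r_e ^ 2 - x ^ 2 := by nlinarith [hx.2]
    exact mul_pos (pow_pos hux 2) (inv_pos.mpr hx0')
  rw [hsplit, e1, e2, e3, keyD]
  set T1 := ∫ r in r_w..r_F,
      (α + β * A * (r_e ^ 2 - r ^ 2) * r⁻¹) * (r_e ^ 2 - r ^ 2) ^ 2 * r⁻¹ with hT1
  set T2 := ∫ r in r_F..r_D, (r_e ^ 2 - r ^ 2) ^ 2 * r⁻¹ with hT2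
  set T3 := ∫ r in r_D..r_e, (r_e ^ 2 - r ^ 2) ^ (2 - s) * r ^ (s - 1) with hT3
  set S := ∫ r in r_w..r_e, (r_e ^ 2 - r ^ 2) ^ 2 * r⁻¹ with hS
  rcases eq_or_ne (T1 + α * T2 + lam * A ^ (-s) * T3) 0 with hT | hT
  · have hnum : A ^ 2 * T1 + A ^ 2 * α * T2 + A ^ 2 * (lam * A ^ (-s)) * T3 = 0 := by
      have : A ^ 2 * T1 + A ^ 2 * α * T2 + A ^ 2 * (lam * A ^ (-s)) * T3
          = A ^ 2 * (T1 + α * T2 + lam * A ^ (-s) * T3) := by ring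
      rw [this, hT, mul_zero]
    rw [hnum, hT, mul_zero, div_zero, div_zero]
  · have hC : (2 * Real.pi * h) ≠ 0 := by positivity
    have hAne : A ≠ 0 := ne_of_gt hApos
    have hSne : S ≠ 0 := ne_of_gt hSpos
    have hαne : α ≠ 0 := ne_of_gt hα
    rw [show A ^ 2 * T1 + A ^ 2 * α * T2 + A ^ 2 * (lam * A ^ (-s)) * T3
        = A ^ 2 * (T1 + α * T2 + lam * A ^ (-s) * T3) from by ring]
    rw [div_mul_eq_mul_div, div_div, div_eq_div_iff
      (mul_ne_zero hC (mul_ne_zero (pow_ne_zero 2 hAne) hT))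
      (mul_ne_zero (mul_ne_zero hC
        (mul_ne_zero (mul_ne_zero (pow_ne_zero 2 hAne) hαne) hSne)) hT)]
    ring
end
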